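/- For every s > 0 and every b ∈ ℝ, ∫_0^∞ e^{−b²(s+t)/2} · √s / (π(s+t)√t) dt = 2Φ(−|b|√s). Equivalently, the total mass of the conditional density f_{T₂|τ₁}(t|s) = e^{−b²(s+t)/2}√s/(π(s+t)√t) equals 1 − 2·sgn(b)·(Φ(b√s) − 1/2), so this density is defective whenever b ≠ 0. -/

import Mathlib

open MeasureTheory

/-- The standard normal cumulative distribution function `Φ`. -/
noncomputable def Phi (y : ℝ) : ℝ :=
  ∫ z in Set.Iic y, Real.exp (-z ^ 2 / 2) / Real.sqrt (2 * Real.pi)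

section Aux
open Real Set Filter

-- L2: ∫ u in Ioi a, u * exp(-c u²) = exp(-c a²)/(2c)
lemma L2 {c : ℝ} (hc : 0 < c) (a : ℝ) :
    ∫ u in Ioi a, u * Real.exp (-c * u ^ 2) = Real.exp (-c * a ^ 2) / (2 * c) := by
  have hderiv : ∀ u ∈ Ici a, HasDerivAt (fun u : ℝ => -Real.exp (-c * u ^ 2) / (2 * c))
      (u * Real.exp (-c * u ^ 2)) u := by
    intro u _
    have h1 : HasDerivAt (fun u : ℝ => -c * u ^ 2) (-c * (2 * u)) u := by
      simpa using ((hasDerivAt_pow 2 u).const_mul (-c))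
    have h2 := (h1.exp).neg.div_const (2 * c)
    convert h2 using 1
    · rfl
    · rfl
    · rfl
    field_simp
  have hint : IntegrableOn (fun u => u * Real.exp (-c * u ^ 2)) (Ioi a) :=
    (integrable_mul_exp_neg_mul_sq hc).integrableOn
  have htend : Tendsto (fun u : ℝ => -Real.exp (-c * u ^ 2) / (2 * c)) atTop (nhds 0) := by
    have h1 : Tendsto (fun u : ℝ => -c * u ^ 2) atTop atBot := by
      have := (tendsto_pow_atTop (n := 2) (by norm_num) : Tendsto (fun u : ℝ => u ^ 2) atTop atTop)
      exact this.const_mul_atTop_of_neg (by linarith)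
    have h2 : Tendsto (fun u : ℝ => Real.exp (-c * u ^ 2)) atTop (nhds 0) :=
      Real.tendsto_exp_atBot.comp h1
    have := (h2.neg).div_const (2 * c)
    simpa using this
  have := integral_Ioi_of_hasDerivAt_of_tendsto' hderiv hint htend
  rw [this]
  simp [neg_div]

lemma phi_integrable : Integrable (fun z : ℝ => Real.exp (-z ^ 2 / 2) / Real.sqrt (2 * Real.pi)) := by
  have : Integrable (fun z : ℝ => Real.exp (-(1/2 : ℝ) * z ^ 2)) :=
    integrable_exp_neg_mul_sq (by norm_num)
  have h := this.div_const (Real.sqrt (2 * Real.pi))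
  convert h using 2 with z
  ring_nf

lemma phi_total : ∫ z : ℝ, Real.exp (-z ^ 2 / 2) / Real.sqrt (2 * Real.pi) = 1 := by
  have h := integral_gaussian (1/2 : ℝ)
  have h2 : (π / (1/2 : ℝ)) = 2 * π := by ring
  rw [h2] at h
  have : ∫ z : ℝ, Real.exp (-z ^ 2 / 2) / Real.sqrt (2 * Real.pi)
      = (∫ z : ℝ, Real.exp (-(1/2 : ℝ) * z ^ 2)) / Real.sqrt (2 * Real.pi) := by
    rw [← integral_div]
    congr 1 with z
    ring_nf
  rw [this, h, div_self]
  positivity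

lemma Phi_neg (y : ℝ) : Phi (-y) = 1 - Phi y := by
  have hsplit : Phi y + ∫ z in Ioi y, Real.exp (-z ^ 2 / 2) / Real.sqrt (2 * Real.pi) = 1 := by
    rw [Phi, ← phi_total]
    exact intervalIntegral.integral_Iic_add_Ioi phi_integrable.integrableOn phi_integrable.integrableOn
  have hrefl : (∫ z in Ioi y, Real.exp (-z ^ 2 / 2) / Real.sqrt (2 * Real.pi)) = Phi (-y) := by
    rw [Phi, ← integral_comp_neg_Ioi]
    congr 1 with z
    ring_nf
  linarith [hsplit, hrefl]

lemma L3 (a : ℝ) : ∫ u in Ioi a, Real.exp (-u ^ 2 / 2) = Real.sqrt (2 * Real.pi) * Phi (-a) := by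
  have h1 : (∫ u in Ioi a, Real.exp (-u ^ 2 / 2)) = ∫ z in Iic (-a), Real.exp (-z ^ 2 / 2) := by
    rw [← integral_comp_neg_Ioi]
    congr 1 with z
    ring_nf
  rw [h1, Phi, ← integral_const_mul]
  congr 1 with z
  rw [mul_div_cancel₀]
  positivity

-- inner integral in v, for u > 0
lemma inner_v {u : ℝ} (hu : 0 < u) :
    ∫ v in Ioi (0:ℝ), u * Real.exp (-(u ^ 2 * (1 + v ^ 2)) / 2)
      = Real.sqrt (2 * Real.pi) / 2 * Real.exp (-u ^ 2 / 2) := by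
  have hpt : ∀ v : ℝ, u * Real.exp (-(u ^ 2 * (1 + v ^ 2)) / 2)
      = (u * Real.exp (-u ^ 2 / 2)) * Real.exp (-(u ^ 2 / 2) * v ^ 2) := by
    intro v
    rw [mul_assoc, ← Real.exp_add]
    ring_nf
  simp_rw [hpt]
  rw [integral_const_mul, integral_gaussian_Ioi]
  have h1 : Real.sqrt (π / (u ^ 2 / 2)) = Real.sqrt (2 * π) / u := by
    rw [show π / (u ^ 2 / 2) = (2 * π) / u ^ 2 by ring,
      Real.sqrt_div (by positivity), Real.sqrt_sq hu.le]
  rw [h1]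
  field_simp

lemma keyF {a : ℝ} (ha : 0 ≤ a) :
    ∫ v in Ioi (0:ℝ), Real.exp (-(a ^ 2 * (1 + v ^ 2)) / 2) / (1 + v ^ 2) = π * Phi (-a) := by
  set f : ℝ → ℝ → ℝ := fun u v => u * Real.exp (-(u ^ 2 * (1 + v ^ 2)) / 2) with hf
  set μ := volume.restrict (Ioi a)
  set ν := volume.restrict (Ioi (0:ℝ))
  have hfc : Continuous (Function.uncurry f) := by
    apply Continuous.mul continuous_fst
    exact (Continuous.div_const (by fun_prop) 2).rexp
  have hmeas : AEStronglyMeasurable (Function.uncurry f) (μ.prod ν) :=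
    hfc.aestronglyMeasurable
  have hfnn : ∀ u v : ℝ, u ∈ Ioi a → 0 ≤ f u v := by
    intro u v hu
    have : 0 < u := lt_of_le_of_lt ha hu
    positivity
  have hptw : ∀ u : ℝ, 0 < u → ∀ v : ℝ, f u v
      = (u * Real.exp (-u ^ 2 / 2)) * Real.exp (-(u ^ 2 / 2) * v ^ 2) := by
    intro u hu v
    rw [hf]; dsimp only
    rw [mul_assoc, ← Real.exp_add]
    ring_nf
  have hae : ∀ᵐ u ∂μ, Integrable (f u) ν := by
    filter_upwards [ae_restrict_mem measurableSet_Ioi] with u hu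
    have hu0 : 0 < u := lt_of_le_of_lt ha hu
    have : Integrable (fun v => (u * Real.exp (-u ^ 2 / 2)) * Real.exp (-(u ^ 2 / 2) * v ^ 2)) :=
      (integrable_exp_neg_mul_sq (by positivity)).const_mul _
    exact (this.congr (by filter_upwards with v using (hptw u hu0 v).symm)).integrableOn
  have hnormint : Integrable (fun u => ∫ v, ‖f u v‖ ∂ν) μ := by
    have htarget : Integrable (fun u : ℝ => Real.sqrt (2 * Real.pi) / 2 * Real.exp (-(1/2:ℝ) * u ^ 2)) :=
      (integrable_exp_neg_mul_sq (by norm_num)).const_mul _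
    apply (htarget.integrableOn : Integrable _ μ).congr
    filter_upwards [ae_restrict_mem measurableSet_Ioi] with u hu
    have hu0 : 0 < u := lt_of_le_of_lt ha hu
    have h1 : ∫ v, ‖f u v‖ ∂ν = ∫ v, f u v ∂ν := by
      apply integral_congr_ae
      filter_upwards with v
      exact Real.norm_of_nonneg (hfnn u v hu)
    rw [h1, show (∫ v, f u v ∂ν) = ∫ v in Ioi (0:ℝ), f u v from rfl, inner_v hu0]
    ring_nf
  have hint : Integrable (Function.uncurry f) (μ.prod ν) :=
    (integrable_prod_iff hmeas).mpr ⟨hae, hnormint⟩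
  have hswap := integral_integral_swap hint
  have hLHS : (∫ u, ∫ v, f u v ∂ν ∂μ) = π * Phi (-a) := by
    have h1 : (∫ u, ∫ v, f u v ∂ν ∂μ)
        = ∫ u in Ioi a, Real.sqrt (2 * Real.pi) / 2 * Real.exp (-u ^ 2 / 2) := by
      apply integral_congr_ae
      filter_upwards [ae_restrict_mem measurableSet_Ioi] with u hu
      exact inner_v (lt_of_le_of_lt ha hu)
    rw [h1, integral_const_mul, L3]
    rw [show Real.sqrt (2 * π) / 2 * (Real.sqrt (2 * π) * Phi (-a))
        = Real.sqrt (2 * π) * Real.sqrt (2 * π) / 2 * Phi (-a) by ring,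
      Real.mul_self_sqrt (by positivity)]
    ring
  have hRHS : (∫ v, ∫ u, f u v ∂μ ∂ν)
      = ∫ v in Ioi (0:ℝ), Real.exp (-(a ^ 2 * (1 + v ^ 2)) / 2) / (1 + v ^ 2) := by
    apply integral_congr_ae
    filter_upwards with v
    have hc : 0 < (1 + v ^ 2) / 2 := by positivity
    have h2 : (∫ u, f u v ∂μ) = ∫ u in Ioi a, u * Real.exp (-((1 + v ^ 2) / 2) * u ^ 2) := by
      apply integral_congr_ae
      filter_upwards with u
      rw [hf]; dsimp only
      ring_nf
    rw [h2, L2 hc, show -((1 + v ^ 2) / 2) * a ^ 2 = -(a ^ 2 * (1 + v ^ 2)) / 2 by ring]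
    congr 1
    ring
  rw [← hRHS, ← hswap, hLHS]

lemma main_eq (s b : ℝ) (hs : 0 < s) :
    (∫ t in Set.Ioi (0:ℝ),
        Real.exp (-b ^ 2 * (s + t) / 2) * Real.sqrt s /
          (Real.pi * (s + t) * Real.sqrt t)) =
      2 * Phi (-(|b| * Real.sqrt s)) := by
  set a := |b| * Real.sqrt s with hadef
  have ha : 0 ≤ a := by positivity
  have ha2 : a ^ 2 = b ^ 2 * s := by
    rw [hadef, mul_pow, sq_abs, Real.sq_sqrt hs.le]
  set g : ℝ → ℝ := fun t => Real.exp (-b ^ 2 * (s + t) / 2) * Real.sqrt s /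
      (Real.pi * (s + t) * Real.sqrt t) with hg
  -- Step 1: scale t = s * x
  have hstep1 : (∫ t in Ioi (0:ℝ), g t) = s * ∫ x in Ioi (0:ℝ), g (s * x) := by
    have := integral_comp_mul_left_Ioi g 0 hs
    rw [mul_zero] at this
    rw [this, smul_eq_mul, ← mul_assoc, mul_inv_cancel₀ hs.ne', one_mul]
  -- Step 2: pointwise simplification
  have hstep2 : (∫ x in Ioi (0:ℝ), g (s * x)) =
      ∫ x in Ioi (0:ℝ), s⁻¹ * (Real.exp (-(a ^ 2 * (1 + x)) / 2) / (π * (1 + x) * Real.sqrt x)) := by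
    apply setIntegral_congr_fun measurableSet_Ioi
    intro x hx
    have hx0 : 0 < x := hx
    rw [hg]; dsimp only
    rw [Real.sqrt_mul hs.le, show -b ^ 2 * (s + s * x) / 2 = -(a ^ 2 * (1 + x)) / 2 by
      rw [ha2]; ring]
    have h1 : Real.sqrt s ≠ 0 := by positivity
    have h2 : Real.sqrt x ≠ 0 := by positivity
    have h3 : (1:ℝ) + x ≠ 0 := by positivity
    field_simp
  -- Step 3: x = v^2
  have hstep3 : (∫ y in Ioi (0:ℝ), Real.exp (-(a ^ 2 * (1 + y)) / 2) / (π * (1 + y) * Real.sqrt y)) =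
      ∫ v in Ioi (0:ℝ), (2 / π) * (Real.exp (-(a ^ 2 * (1 + v ^ 2)) / 2) / (1 + v ^ 2)) := by
    rw [← integral_comp_rpow_Ioi_of_pos (p := 2)
      (g := fun y => Real.exp (-(a ^ 2 * (1 + y)) / 2) / (π * (1 + y) * Real.sqrt y)) (by norm_num)]
    apply setIntegral_congr_fun measurableSet_Ioi
    intro v hv
    have hv0 : 0 < v := hv
    simp only [smul_eq_mul]
    rw [show (2:ℝ) - 1 = 1 by norm_num, Real.rpow_one,
      show ∀ w : ℝ, w ^ (2:ℝ) = w ^ 2 from fun w => by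
        rw [← Real.rpow_natCast w 2]; norm_num,
      Real.sqrt_sq hv0.le]
    have h2 : (1:ℝ) + v ^ 2 ≠ 0 := by positivity
    field_simp
  calc (∫ t in Ioi (0:ℝ), g t)
      = s * ∫ x in Ioi (0:ℝ), g (s * x) := hstep1
    _ = s * ∫ x in Ioi (0:ℝ), s⁻¹ *
          (Real.exp (-(a ^ 2 * (1 + x)) / 2) / (π * (1 + x) * Real.sqrt x)) := by rw [hstep2]
    _ = ∫ x in Ioi (0:ℝ), Real.exp (-(a ^ 2 * (1 + x)) / 2) / (π * (1 + x) * Real.sqrt x) := by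
        rw [integral_const_mul, ← mul_assoc, mul_inv_cancel₀ hs.ne', one_mul]
    _ = ∫ v in Ioi (0:ℝ), (2 / π) * (Real.exp (-(a ^ 2 * (1 + v ^ 2)) / 2) / (1 + v ^ 2)) := hstep3
    _ = (2 / π) * (π * Phi (-a)) := by rw [integral_const_mul, keyF ha]
    _ = 2 * Phi (-a) := by
        field_simp

lemma second_eq (s b : ℝ) (hs : 0 < s) :
    2 * Phi (-(|b| * Real.sqrt s)) = 1 - 2 * Real.sign b * (Phi (b * Real.sqrt s) - 1 / 2) := by
  rcases lt_trichotomy b 0 with hb | hb | hb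
  · rw [Real.sign_of_neg hb, abs_of_neg hb, show -(-b * Real.sqrt s) = b * Real.sqrt s by ring]
    ring
  · subst hb
    have h0 : Phi 0 = 1 / 2 := by
      have := Phi_neg 0
      rw [neg_zero] at this
      linarith
    simp [h0]
  · rw [Real.sign_of_pos hb, abs_of_pos hb, Phi_neg]
    ring

end Aux

/-- the total mass of the conditional density
`f_{T₂|τ₁}(t|s) = e^{-b²(s+t)/2} √s/(π(s+t)√t)` equals `2Φ(-|b|√s)`, i.e.
`1 - 2 sgn(b) (Φ(b√s) - 1/2)`; in particular it is defective whenever `b ≠ 0`. -/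
theorem stmt_5 (s b : ℝ) (hs : 0 < s) :
    (∫ t in Set.Ioi (0:ℝ),
        Real.exp (-b ^ 2 * (s + t) / 2) * Real.sqrt s /
          (Real.pi * (s + t) * Real.sqrt t)) =
      2 * Phi (-(|b| * Real.sqrt s)) ∧
    (∫ t in Set.Ioi (0:ℝ),
        Real.exp (-b ^ 2 * (s + t) / 2) * Real.sqrt s /
          (Real.pi * (s + t) * Real.sqrt t)) =
      1 - 2 * Real.sign b * (Phi (b * Real.sqrt s) - 1 / 2) :=
  ⟨main_eq s b hs, (main_eq s b hs).trans (second_eq s b hs)⟩
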